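/- Let Z : [0,∞) → (0,∞) be continuous, increasing, with u/Z(u) nondecreasing for u > u₀ (u₀ ≥ 0). Fix coefficients a₁,…,a_N and define I(t,x,λ) = cos(xλ + t·Σ_{k=1}^N a_k λ^{2k+1}(−1)^k). Then for all t, t₁, x, x₁ with x ≠ x₁ and t ≠ t₁, |I(t,x,λ) − I(t₁,x₁,λ)| ≤ 2·Z(|λ|/2 + u₀)/Z(1/|x−x₁| + u₀) + 2·Z((1/2)|Σ_{k=1}^N a_k λ^{2k+1}(−1)^k| + u₀)/Z(1/|t−t₁| + u₀). -/

import Mathlib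

lemma sinZ_bound (Z : ℝ → ℝ) (u₀ : ℝ) (hu₀ : 0 ≤ u₀)
    (hZcont : ContinuousOn Z (Set.Ici 0))
    (hZmono : StrictMonoOn Z (Set.Ici 0))
    (hZpos : ∀ u : ℝ, 0 < u → 0 < Z u)
    (hratio : ∀ u v : ℝ, u₀ < u → u ≤ v → u / Z u ≤ v / Z v)
    (p q : ℝ) (hp : 0 ≤ p) (hq : 0 < q) :
    |Real.sin (p / q)| ≤ Z (p + u₀) / Z (q + u₀) := by
  have hZq : 0 < Z (q + u₀) := hZpos _ (by linarith)
  have hZnn : ∀ u : ℝ, 0 ≤ u → 0 ≤ Z u := by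
    intro u hu
    rcases hu.lt_or_eq with h | h
    · exact (hZpos u h).le
    · subst h
      have htend : Filter.Tendsto Z (nhdsWithin 0 (Set.Ioi 0)) (nhds (Z 0)) :=
        ((hZcont 0 (by simp)).mono Set.Ioi_subset_Ici_self).tendsto
      exact ge_of_tendsto htend (Filter.eventually_of_mem self_mem_nhdsWithin
        (fun u hu => (hZpos u hu).le))
  rcases le_or_gt q p with h | h
  · have h1 : Z (q + u₀) ≤ Z (p + u₀) :=
      hZmono.monotoneOn (by simp [Set.mem_Ici]; linarith) (by simp [Set.mem_Ici]; linarith)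
        (by linarith)
    calc |Real.sin (p / q)| ≤ 1 := Real.abs_sin_le_one _
    _ ≤ Z (p + u₀) / Z (q + u₀) := (one_le_div hZq).2 h1
  · rcases hp.lt_or_eq with hp' | hp'
    · have hZp : 0 < Z (p + u₀) := hZpos _ (by linarith)
      have h1 : |Real.sin (p / q)| ≤ p / q := by
        calc |Real.sin (p / q)| ≤ |p / q| := Real.abs_sin_le_abs
        _ = p / q := abs_of_nonneg (by positivity)
      have h2 : p / q ≤ (p + u₀) / (q + u₀) := by
        rw [div_le_div_iff₀ hq (by linarith)]
        nlinarith
      have h3 : (p + u₀) / Z (p + u₀) ≤ (q + u₀) / Z (q + u₀) :=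
        hratio _ _ (by linarith) (by linarith)
      have h4 : (p + u₀) / (q + u₀) ≤ Z (p + u₀) / Z (q + u₀) := by
        rw [div_le_div_iff₀ hZp hZq] at h3
        rw [div_le_div_iff₀ (by linarith) hZq]
        linarith
      linarith
    · rw [← hp']
      simp only [zero_div, Real.sin_zero, abs_zero, zero_add]
      exact div_nonneg (hZnn u₀ hu₀) hZq.le

theorem kernel_increment_bound_Z (Z : ℝ → ℝ) (u₀ : ℝ) (hu₀ : 0 ≤ u₀)
    (hZcont : ContinuousOn Z (Set.Ici 0))
    (hZmono : StrictMonoOn Z (Set.Ici 0))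
    (hZpos : ∀ u : ℝ, 0 < u → 0 < Z u)
    (hratio : ∀ u v : ℝ, u₀ < u → u ≤ v → u / Z u ≤ v / Z v)
    (N : ℕ) (a : ℕ → ℝ) (lam x x₁ t t₁ : ℝ) (hx : x ≠ x₁) (ht : t ≠ t₁) :
    |Real.cos (x * lam + t * ∑ k ∈ Finset.Icc 1 N, a k * lam ^ (2 * k + 1) * (-1 : ℝ) ^ k)
      - Real.cos (x₁ * lam + t₁ * ∑ k ∈ Finset.Icc 1 N, a k * lam ^ (2 * k + 1) * (-1 : ℝ) ^ k)|
    ≤ 2 * Z (|lam| / 2 + u₀) / Z (1 / |x - x₁| + u₀)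
      + 2 * Z ((1 / 2) * |∑ k ∈ Finset.Icc 1 N, a k * lam ^ (2 * k + 1) * (-1 : ℝ) ^ k| + u₀)
          / Z (1 / |t - t₁| + u₀) := by
  set S := ∑ k ∈ Finset.Icc 1 N, a k * lam ^ (2 * k + 1) * (-1 : ℝ) ^ k with hS
  set A := x * lam + t * S
  set B := x₁ * lam + t₁ * S
  have hxx : 0 < |x - x₁| := abs_pos.2 (sub_ne_zero.2 hx)
  have htt : 0 < |t - t₁| := abs_pos.2 (sub_ne_zero.2 ht)
  have habs_sin : ∀ z : ℝ, |Real.sin z| = |Real.sin (|z|)| := by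
    intro z
    rcases abs_cases z with ⟨h, _⟩ | ⟨h, _⟩ <;> rw [h] <;> simp [Real.sin_neg]
  have step1 : |Real.cos A - Real.cos B| ≤ 2 * |Real.sin ((A - B) / 2)| := by
    rw [Real.cos_sub_cos]
    rw [abs_mul, abs_mul]
    have := Real.abs_sin_le_one ((A + B) / 2)
    have h2 : |Real.sin ((A - B) / 2)| ≥ 0 := abs_nonneg _
    calc |(-2 : ℝ)| * |Real.sin ((A + B) / 2)| * |Real.sin ((A - B) / 2)|
        ≤ |(-2 : ℝ)| * 1 * |Real.sin ((A - B) / 2)| := by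
          apply mul_le_mul_of_nonneg_right _ h2
          exact mul_le_mul_of_nonneg_left this (abs_nonneg _)
      _ = 2 * |Real.sin ((A - B) / 2)| := by norm_num
  have hAB : (A - B) / 2 = (x - x₁) * lam / 2 + (t - t₁) * S / 2 := by
    simp only [A, B]; ring
  have step2 : |Real.sin ((A - B) / 2)|
      ≤ |Real.sin ((x - x₁) * lam / 2)| + |Real.sin ((t - t₁) * S / 2)| := by
    rw [hAB, Real.sin_add]
    calc |Real.sin ((x - x₁) * lam / 2) * Real.cos ((t - t₁) * S / 2)
          + Real.cos ((x - x₁) * lam / 2) * Real.sin ((t - t₁) * S / 2)|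
        ≤ |Real.sin ((x - x₁) * lam / 2) * Real.cos ((t - t₁) * S / 2)|
          + |Real.cos ((x - x₁) * lam / 2) * Real.sin ((t - t₁) * S / 2)| := abs_add_le _ _
      _ ≤ |Real.sin ((x - x₁) * lam / 2)| + |Real.sin ((t - t₁) * S / 2)| := by
          rw [abs_mul, abs_mul]
          have h1 := Real.abs_cos_le_one ((t - t₁) * S / 2)
          have h2 := Real.abs_cos_le_one ((x - x₁) * lam / 2)
          have h3 := abs_nonneg (Real.sin ((x - x₁) * lam / 2))
          have h4 := abs_nonneg (Real.sin ((t - t₁) * S / 2))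
          have h5 := abs_nonneg (Real.cos ((x - x₁) * lam / 2))
          have h6 := abs_nonneg (Real.cos ((t - t₁) * S / 2))
          nlinarith
  have b1 : |Real.sin ((x - x₁) * lam / 2)|
      ≤ Z (|lam| / 2 + u₀) / Z (1 / |x - x₁| + u₀) := by
    rw [habs_sin]
    have heq : |(x - x₁) * lam / 2| = (|lam| / 2) / (1 / |x - x₁|) := by
      rw [abs_div, abs_mul]
      field_simp
      ring
    rw [heq]
    exact sinZ_bound Z u₀ hu₀ hZcont hZmono hZpos hratio _ _ (by positivity) (by positivity)
  have b2 : |Real.sin ((t - t₁) * S / 2)|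
      ≤ Z ((1 / 2) * |S| + u₀) / Z (1 / |t - t₁| + u₀) := by
    rw [habs_sin]
    have heq : |(t - t₁) * S / 2| = ((1 / 2) * |S|) / (1 / |t - t₁|) := by
      rw [abs_div, abs_mul]
      field_simp
      ring
    rw [heq]
    exact sinZ_bound Z u₀ hu₀ hZcont hZmono hZpos hratio _ _ (by positivity) (by positivity)
  calc |Real.cos A - Real.cos B| ≤ 2 * |Real.sin ((A - B) / 2)| := step1
    _ ≤ 2 * (|Real.sin ((x - x₁) * lam / 2)| + |Real.sin ((t - t₁) * S / 2)|) := by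
        linarith
    _ ≤ 2 * (Z (|lam| / 2 + u₀) / Z (1 / |x - x₁| + u₀)
          + Z ((1 / 2) * |S| + u₀) / Z (1 / |t - t₁| + u₀)) := by linarith
    _ = 2 * Z (|lam| / 2 + u₀) / Z (1 / |x - x₁| + u₀)
          + 2 * Z ((1 / 2) * |S| + u₀) / Z (1 / |t - t₁| + u₀) := by ring
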